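/- Let λ₁,…,λₙ be distinct elements of a field of characteristic zero and 0 < k < n. Then ∑_{I⊂[n],|I|=k} (∏_{i∈I} λ_i)^{n−k} / ∏_{i∈I}∏_{j∈Iᶜ}(λ_i−λ_j) = 1. -/

import Mathlib

open Finset

section CB

open Matrix Equiv BigOperators

variable {k n : ℕ} {α : Type*} [LinearOrder α]

private theorem orderEmbOfFin_congr {s t : Finset α} (hst : s = t) (hs : s.card = k) (i : Fin k) :
    s.orderEmbOfFin hs i = t.orderEmbOfFin (hst ▸ hs) i := by subst hst; rfl

private theorem image_card (f : Fin k → Fin n) (hf : Function.Injective f) :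
    (univ.image f).card = k := by
  rw [Finset.card_image_of_injective _ hf, card_univ, Fintype.card_fin]

private noncomputable def permOf (f : Fin k → Fin n) (hf : Function.Injective f) : Perm (Fin k) :=
  Equiv.ofBijective
    (fun a => ((univ.image f).orderIsoOfFin (image_card f hf)).symm
      ⟨f a, Finset.mem_image_of_mem f (mem_univ a)⟩)
    (Finite.injective_iff_bijective.mp (fun a b hab => by
      exact hf (Subtype.ext_iff.mp
        (((univ.image f).orderIsoOfFin (image_card f hf)).symm.injective hab))))

private theorem orderEmbOfFin_permOf (f : Fin k → Fin n) (hf : Function.Injective f) (a : Fin k) :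
    (univ.image f).orderEmbOfFin (image_card f hf) (permOf f hf a) = f a := by
  rw [← Finset.coe_orderIsoOfFin_apply]
  simp [permOf]

private theorem image_orderEmbOfFin_comp {I : Finset (Fin n)} (hI : I.card = k) (σ : Perm (Fin k)) :
    univ.image (fun a => I.orderEmbOfFin hI (σ a)) = I := by
  apply Finset.eq_of_subset_of_card_le
  · intro x hx
    simp only [Finset.mem_image] at hx
    obtain ⟨a, _, rfl⟩ := hx
    exact Finset.orderEmbOfFin_mem _ _ _
  · rw [hI, image_card _ (fun a b h => σ.injective ((I.orderEmbOfFin hI).injective h))]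

private theorem permOf_comp {I : Finset (Fin n)} (hI : I.card = k) (σ : Perm (Fin k)) :
    permOf (fun a => I.orderEmbOfFin hI (σ a))
      (fun a b h => σ.injective ((I.orderEmbOfFin hI).injective h)) = σ := by
  set f := fun a => I.orderEmbOfFin hI (σ a) with hfdef
  have hf : Function.Injective f := fun a b h => σ.injective ((I.orderEmbOfFin hI).injective h)
  refine Equiv.ext fun a => (I.orderEmbOfFin hI).injective ?_
  have h2 : (univ.image f).orderEmbOfFin (image_card f hf) (permOf f hf a)
      = I.orderEmbOfFin hI (permOf f hf a) :=
    orderEmbOfFin_congr (image_orderEmbOfFin_comp hI σ) _ _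
  rw [← h2, orderEmbOfFin_permOf]

variable {R : Type*} [CommRing R]

private theorem det_mul_rect (M : Matrix (Fin k) (Fin n) R) (N : Matrix (Fin n) (Fin k) R) :
    (M * N).det = ∑ f : Fin k → Fin n, (∏ a, N (f a) a) * (M.submatrix id f).det := by
  have h1 : (M * N).det
      = ∑ f : Fin k → Fin n, ∑ σ : Perm (Fin k), Perm.sign σ • ∏ a, M (σ a) (f a) * N (f a) a := by
    simp only [det_apply, mul_apply, prod_univ_sum, sum_comm (γ := Perm (Fin k)),
      Fintype.piFinset_univ, smul_sum]
  rw [h1]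
  refine Finset.sum_congr rfl fun f _ => ?_
  rw [det_apply, Finset.mul_sum]
  refine Finset.sum_congr rfl fun σ _ => ?_
  simp only [submatrix_apply, id_eq, prod_mul_distrib]
  rw [mul_smul_comm, mul_comm]

theorem cauchy_binet (M : Matrix (Fin k) (Fin n) R) (N : Matrix (Fin n) (Fin k) R) :
    (M * N).det = ∑ I : {s : Finset (Fin n) // s.card = k},
      (M.submatrix id (I.1.orderEmbOfFin I.2)).det
        * (N.submatrix (I.1.orderEmbOfFin I.2) id).det := by
  rw [det_mul_rect]
  have step1 : ∑ f : Fin k → Fin n, (∏ a, N (f a) a) * (M.submatrix id f).det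
      = ∑ f ∈ univ.filter (fun f : Fin k → Fin n => Function.Injective f),
          (∏ a, N (f a) a) * (M.submatrix id f).det := by
    refine (Finset.sum_subset (filter_subset _ _) (fun f _ hf => ?_)).symm
    simp only [mem_filter, mem_univ, true_and] at hf
    rw [Function.not_injective_iff] at hf
    obtain ⟨a, b, hab, hne⟩ := hf
    rw [det_zero_of_column_eq hne (fun r => by simp [hab]), mul_zero]
  rw [step1]
  have step2 : ∑ f ∈ univ.filter (fun f : Fin k → Fin n => Function.Injective f),
        (∏ a, N (f a) a) * (M.submatrix id f).det
      = ∑ p : {s : Finset (Fin n) // s.card = k} × Perm (Fin k),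
          (∏ a, N (p.1.1.orderEmbOfFin p.1.2 (p.2 a)) a)
            * (M.submatrix id (fun a => p.1.1.orderEmbOfFin p.1.2 (p.2 a))).det := by
    refine Finset.sum_bij'
      (fun f hf => (⟨univ.image f, image_card f (by simpa using hf)⟩,
        permOf f (by simpa using hf)))
      (fun p _ => fun a => p.1.1.orderEmbOfFin p.1.2 (p.2 a))
      (fun f hf => mem_univ _)
      (fun p _ => by
        simp only [mem_filter, mem_univ, true_and]
        exact fun a b h => p.2.injective ((p.1.1.orderEmbOfFin p.1.2).injective h))
      (fun f hf => funext fun a => orderEmbOfFin_permOf f (by simpa using hf) a)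
      (fun p _ => by
        have h1 := image_orderEmbOfFin_comp p.1.2 p.2
        refine Prod.ext (Subtype.ext ?_) ?_
        · exact h1
        · exact permOf_comp p.1.2 p.2)
      (fun f hf => by
        exact congrArg (fun g : Fin k → Fin n => (∏ a, N (g a) a) * (M.submatrix id g).det)
          (funext fun a =>
            (orderEmbOfFin_permOf f (by simpa using hf : Function.Injective f) a).symm))
  rw [step2, Fintype.sum_prod_type]
  refine Finset.sum_congr rfl fun I _ => ?_
  have key : ∀ σ : Perm (Fin k),
      (M.submatrix id (fun a => I.1.orderEmbOfFin I.2 (σ a))).det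
        = Perm.sign σ * (M.submatrix id (I.1.orderEmbOfFin I.2)).det := by
    intro σ
    have : M.submatrix id (fun a => I.1.orderEmbOfFin I.2 (σ a))
        = (M.submatrix id (I.1.orderEmbOfFin I.2)).submatrix id σ := rfl
    rw [this, det_permute']
  simp only [key]
  rw [det_apply' (N.submatrix (I.1.orderEmbOfFin I.2) id), Finset.mul_sum]
  refine Finset.sum_congr rfl fun σ _ => ?_
  simp only [submatrix_apply, id_eq]
  ring

private theorem det_antiHankel (k : ℕ) (t : ℕ → R) :
    (Matrix.of fun a s : Fin k => if (a : ℕ) + (s : ℕ) + 1 = k then 1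
      else if (a : ℕ) + (s : ℕ) + 1 < k then t ((a : ℕ) + (s : ℕ)) else 0).det
      = (-1) ^ (k.choose 2) := by
  induction k generalizing t with
  | zero => simp [Matrix.det_fin_zero]
  | succ k ih =>
    rw [Matrix.det_succ_row _ (Fin.last k)]
    rw [Fintype.sum_eq_single (0 : Fin (k + 1)) (fun j hj => by
      have hj' : (0 : ℕ) < (j : ℕ) := by
        rcases Nat.eq_zero_or_pos (j : ℕ) with h | h
        · exact absurd (Fin.ext h) hj
        · exact h
      have h1 : ¬((Fin.last k : ℕ) + (j : ℕ) + 1 = k + 1) := by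
        simp only [Fin.val_last]; omega
      have h2 : ¬((Fin.last k : ℕ) + (j : ℕ) + 1 < k + 1) := by
        simp only [Fin.val_last]; omega
      simp only [Matrix.of_apply, h1, h2, if_false, mul_zero, zero_mul])]
    have hminor : (Matrix.of fun a s : Fin (k+1) => if (a : ℕ) + (s : ℕ) + 1 = k + 1 then (1 : R)
          else if (a : ℕ) + (s : ℕ) + 1 < k + 1 then t ((a : ℕ) + (s : ℕ)) else 0).submatrix
          (Fin.last k).succAbove (0 : Fin (k+1)).succAbove
        = Matrix.of fun a s : Fin k => if (a : ℕ) + (s : ℕ) + 1 = k then 1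
            else if (a : ℕ) + (s : ℕ) + 1 < k then (fun m => t (m + 1)) ((a : ℕ) + (s : ℕ)) else 0 := by
      ext a s
      simp only [Matrix.submatrix_apply, Fin.succAbove_last, Fin.succAbove_zero,
        Matrix.of_apply, Fin.coe_castSucc, Fin.val_succ]
      have e1 : (a : ℕ) + ((s : ℕ) + 1) + 1 = k + 1 ↔ (a : ℕ) + (s : ℕ) + 1 = k := by omega
      have e2 : (a : ℕ) + ((s : ℕ) + 1) + 1 < k + 1 ↔ (a : ℕ) + (s : ℕ) + 1 < k := by omega
      have e3 : (a : ℕ) + ((s : ℕ) + 1) = (a : ℕ) + (s : ℕ) + 1 := by omega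
      simp only [e3]
      by_cases h : (a : ℕ) + (s : ℕ) + 1 = k <;> simp [h, e1, e2] <;> omega
    rw [hminor, ih (fun m => t (m + 1))]
    have hentry : (Matrix.of fun a s : Fin (k+1) => if (a : ℕ) + (s : ℕ) + 1 = k + 1 then (1 : R)
        else if (a : ℕ) + (s : ℕ) + 1 < k + 1 then t ((a : ℕ) + (s : ℕ)) else 0) (Fin.last k) 0
        = 1 := by
      simp [Fin.val_last]
    rw [hentry, mul_one, Fin.val_last, Fin.val_zero, add_zero, ← pow_add]
    congr 1
    have : (k+1).choose 2 = k + k.choose 2 := by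
      rw [Nat.choose_succ_succ, Nat.choose_one_right]
    omega

end CB


section Lag
open Polynomial


variable {F : Type*} [Field F] {n : ℕ} (lam : Fin n → F)

private theorem lag_basis_eq (s : Finset (Fin n)) (i : Fin n) :
    Lagrange.basis s lam i
      = C (∏ j ∈ s.erase i, (lam i - lam j)⁻¹) * Lagrange.nodal (s.erase i) lam := by
  simp only [Lagrange.basis, Lagrange.basisDivisor, Lagrange.nodal]
  rw [Finset.prod_mul_distrib, map_prod]

private theorem coeff_nodal_erase (i : Fin n) {r : ℕ} (hr : r < n) :
    (Lagrange.nodal (univ.erase i) lam).coeff (n - 1 - r)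
      = ∑ s ∈ Finset.range (r + 1), lam i ^ s * (Lagrange.nodal univ lam).coeff (n - r + s) := by
  have hP : Lagrange.nodal univ lam
      = Lagrange.nodal (univ.erase i) lam * (X - C (lam i)) := by
    rw [mul_comm, ← Lagrange.nodal_eq_mul_nodal_erase (mem_univ i)]
  set g := Lagrange.nodal (univ.erase i) lam with hg
  have hterm : ∀ s, lam i ^ s * (Lagrange.nodal univ lam).coeff (n - r + s)
      = (fun s => lam i ^ s * g.coeff (n - 1 - r + s)) s
        - (fun s => lam i ^ s * g.coeff (n - 1 - r + s)) (s + 1) := by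
    intro s
    have hidx : n - r + s = (n - 1 - r + s) + 1 := by omega
    rw [hP, hidx, coeff_mul_X_sub_C]
    have h2 : n - 1 - r + s + 1 = n - 1 - r + (s + 1) := by omega
    simp only [h2, pow_succ]
    ring
  rw [Finset.sum_congr rfl (fun s _ => hterm s), Finset.sum_range_sub']
  have hgn : g.coeff (n - 1 - r + (r + 1)) = 0 := by
    apply coeff_eq_zero_of_natDegree_lt
    rw [hg, Lagrange.natDegree_nodal, card_erase_of_mem (mem_univ i), card_univ,
      Fintype.card_fin]
    omega
  simp [hgn]

private theorem coeff_nodal_erase' {k : ℕ} (hk : k < n) (i : Fin n) (a : Fin k) :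
    (Lagrange.nodal (univ.erase i) lam).coeff ((n - k) + a)
      = ∑ s : Fin k, (if (a : ℕ) + (s : ℕ) + 1 = k then 1
          else if (a : ℕ) + (s : ℕ) + 1 < k
            then (Lagrange.nodal univ lam).coeff (n - k + 1 + ((a : ℕ) + (s : ℕ))) else 0)
          * lam i ^ (s : ℕ) := by
  have hPn : (Lagrange.nodal univ lam).coeff n = 1 := by
    have hm : (Lagrange.nodal univ lam).Monic := Lagrange.nodal_monic
    have hd : (Lagrange.nodal univ lam).natDegree = n := by
      rw [Lagrange.natDegree_nodal, card_univ, Fintype.card_fin]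
    have h := hm.coeff_natDegree
    rwa [hd] at h
  have ha : (a : ℕ) < k := a.2
  set r := k - 1 - (a : ℕ) with hr
  have h1 : (n - k) + (a : ℕ) = n - 1 - r := by omega
  rw [h1, coeff_nodal_erase lam i (by omega : r < n)]
  rw [Fin.sum_univ_eq_sum_range (fun s => (if (a : ℕ) + s + 1 = k then 1
      else if (a : ℕ) + s + 1 < k
        then (Lagrange.nodal univ lam).coeff (n - k + 1 + ((a : ℕ) + s)) else 0) * lam i ^ s)]
  have hsub : Finset.range (r + 1) ⊆ Finset.range k := by
    apply Finset.range_subset_range.mpr; omega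
  rw [← Finset.sum_subset hsub (fun s _ hs => by
    simp only [Finset.mem_range, not_lt] at hs
    have h2 : ¬((a : ℕ) + s + 1 = k) := by omega
    have h3 : ¬((a : ℕ) + s + 1 < k) := by omega
    simp [h2, h3])]
  refine Finset.sum_congr rfl fun s hs => ?_
  simp only [Finset.mem_range] at hs
  have hidx : n - k + 1 + ((a : ℕ) + s) = n - r + s := by omega
  rw [hidx]
  by_cases h : (a : ℕ) + s + 1 = k
  · have : n - r + s = n := by omega
    rw [if_pos h, this, hPn, one_mul, mul_one]
  · rw [if_neg h, if_pos (by omega : (a : ℕ) + s + 1 < k), mul_comm]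

end Lag

section Pair


variable {F : Type*} [Field F]

private theorem prod_offdiag_eq {k : ℕ} (μ : Fin k → F) :
    ∏ a, ∏ b ∈ univ.erase a, (μ a - μ b)
      = (-1) ^ (k.choose 2) * (∏ a, ∏ b ∈ Finset.Ioi a, (μ b - μ a)) ^ 2 := by
  have herase : ∀ a : Fin k, univ.erase a = Finset.Iio a ∪ Finset.Ioi a := by
    intro a; ext b
    simp only [mem_erase, mem_univ, and_true, Finset.mem_union, Finset.mem_Iio, Finset.mem_Ioi]
    exact ne_iff_lt_or_gt
  have hdisj : ∀ a : Fin k, Disjoint (Finset.Iio a) (Finset.Ioi a) :=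
    fun a => (Finset.disjoint_Ioi_Iio a).symm
  have hsplit : ∏ a, ∏ b ∈ univ.erase a, (μ a - μ b)
      = (∏ a, ∏ b ∈ Finset.Iio a, (μ a - μ b)) * ∏ a, ∏ b ∈ Finset.Ioi a, (μ a - μ b) := by
    rw [← Finset.prod_mul_distrib]
    refine Finset.prod_congr rfl fun a _ => ?_
    rw [herase a, Finset.prod_union (hdisj a)]
  have hpiece1 : ∏ a, ∏ b ∈ Finset.Iio a, (μ a - μ b)
      = ∏ a, ∏ b ∈ Finset.Ioi a, (μ b - μ a) := by
    refine Finset.prod_comm' (fun x y => ?_)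
    simp only [mem_univ, true_and, Finset.mem_Iio, Finset.mem_Ioi, and_true]
  have hpiece2 : ∏ a, ∏ b ∈ Finset.Ioi a, (μ a - μ b)
      = (-1) ^ (k.choose 2) * ∏ a, ∏ b ∈ Finset.Ioi a, (μ b - μ a) := by
    have h1 : ∀ a : Fin k, ∏ b ∈ Finset.Ioi a, (μ a - μ b)
        = (-1 : F) ^ (Finset.Ioi a).card * ∏ b ∈ Finset.Ioi a, (μ b - μ a) := by
      intro a
      rw [← Finset.prod_const, ← Finset.prod_mul_distrib]
      refine Finset.prod_congr rfl fun b _ => by ring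
    simp only [h1]
    rw [Finset.prod_mul_distrib, Finset.prod_pow_eq_pow_sum]
    congr 2
    have : ∀ a : Fin k, (Finset.Ioi a).card = k - 1 - (a : ℕ) := fun a => Fin.card_Ioi a
    simp only [this]
    rw [Fin.sum_univ_eq_sum_range (fun i => k - 1 - i)]
    rw [Finset.sum_range_reflect (fun i => i) k]
    · rw [Finset.sum_range_id, Nat.choose_two_right]
  rw [hsplit, hpiece1, hpiece2]
  ring

end Pair

open Polynomial in
theorem sum_prod_pow_div_prod_eq_one {F : Type*} [Field F] [CharZero F]
    (n k : ℕ) (hk0 : 0 < k) (hk : k < n)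
    (lam : Fin n → F) (hlam : Function.Injective lam) :
    ∑ I : {s : Finset (Fin n) // s.card = k},
        (∏ i ∈ I.1, lam i) ^ (n - k) / ∏ i ∈ I.1, ∏ j ∈ I.1ᶜ, (lam i - lam j) = 1 := by
  classical
  have hinjOn : Set.InjOn lam ↑(univ : Finset (Fin n)) := fun x _ y _ h => hlam h
  set m := n - k with hm
  set P : Polynomial F := Lagrange.nodal univ lam with hPdef
  set M : Matrix (Fin k) (Fin n) F :=
    Matrix.of (fun a i => (Lagrange.basis univ lam i).coeff (m + (a : ℕ))) with hMdef
  set N : Matrix (Fin n) (Fin k) F := Matrix.of (fun i b => lam i ^ (m + (b : ℕ))) with hNdef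
  have hMN : M * N = 1 := by
    ext a b
    rw [Matrix.mul_apply]
    have hdeg : ((X : F[X]) ^ (m + (b : ℕ))).degree < ((univ : Finset (Fin n)).card : ℕ) := by
      rw [Polynomial.degree_X_pow, card_univ, Fintype.card_fin]
      exact_mod_cast (by omega : m + (b : ℕ) < n)
    have hint := Lagrange.eq_interpolate hinjOn hdeg
    have hco := congrArg (fun p : F[X] => p.coeff (m + (a : ℕ))) hint
    have hIA : Lagrange.interpolate univ lam (fun i => ((X : F[X]) ^ (m + (b : ℕ))).eval (lam i))
        = ∑ i, Polynomial.C (((X : F[X]) ^ (m + (b : ℕ))).eval (lam i))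
            * Lagrange.basis univ lam i := rfl
    rw [hIA] at hco
    simp only [Polynomial.finset_sum_coeff, Polynomial.coeff_C_mul, Polynomial.eval_pow,
      Polynomial.eval_X, Polynomial.coeff_X_pow] at hco
    simp only [hMdef, hNdef, Matrix.of_apply]
    rw [Finset.sum_congr rfl (fun i _ => mul_comm ((Lagrange.basis univ lam i).coeff (m + (a:ℕ)))
      (lam i ^ (m + (b:ℕ))))]
    rw [← hco, Matrix.one_apply]
    by_cases hab : a = b
    · subst hab; simp
    · have : ¬(m + (a : ℕ) = m + (b : ℕ)) := by
        intro h; exact hab (Fin.ext (by omega))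
      simp [hab, this]
      exact fun h => hab (Fin.ext h)
  have h1 : (1 : F) = ∑ I : {s : Finset (Fin n) // s.card = k},
      (M.submatrix id (I.1.orderEmbOfFin I.2)).det
        * (N.submatrix (I.1.orderEmbOfFin I.2) id).det := by
    rw [← cauchy_binet, hMN, Matrix.det_one]
  rw [h1]
  refine Finset.sum_congr rfl fun I _ => ?_
  set ι := I.1.orderEmbOfFin I.2 with hι
  set μ : Fin k → F := fun a => lam (ι a) with hμ
  have hμinj : Function.Injective μ := fun a b h => ι.injective (hlam h)
  have hVne : (Matrix.vandermonde μ).det ≠ 0 := Matrix.det_vandermonde_ne_zero_iff.mpr hμinj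
  have hIimg : univ.image (fun a => ι a) = I.1 := by
    have := image_orderEmbOfFin_comp I.2 (Equiv.refl (Fin k))
    exact this
  have htrans : ∀ f : Fin n → F, ∏ i ∈ I.1, f i = ∏ a, f (ι a) := by
    intro f
    rw [← hIimg, Finset.prod_image (fun a _ b _ h => ι.injective h)]
  have hNsub : N.submatrix ι id = Matrix.diagonal (fun a => μ a ^ m) * Matrix.vandermonde μ := by
    ext a b
    simp only [Matrix.submatrix_apply, id_eq, hNdef, Matrix.of_apply, Matrix.diagonal_mul,
      Matrix.vandermonde_apply, pow_add, hμ]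
  have hNdet : (N.submatrix ι id).det
      = (∏ i ∈ I.1, lam i) ^ m * (Matrix.vandermonde μ).det := by
    rw [hNsub, Matrix.det_mul, Matrix.det_diagonal, htrans lam, Finset.prod_pow]
  set w : Fin k → F := fun b => ∏ j ∈ univ.erase (ι b), (lam (ι b) - lam j)⁻¹ with hw
  set T : Matrix (Fin k) (Fin k) F := Matrix.of fun a s : Fin k =>
    if (a : ℕ) + (s : ℕ) + 1 = k then 1
    else if (a : ℕ) + (s : ℕ) + 1 < k then P.coeff (n - k + 1 + ((a : ℕ) + (s : ℕ))) else 0 with hT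
  have hTdet : T.det = (-1 : F) ^ (k.choose 2) := det_antiHankel k (fun j => P.coeff (n - k + 1 + j))
  have hMsub : M.submatrix id ι = T * (Matrix.vandermonde μ).transpose * Matrix.diagonal w := by
    ext a b
    rw [Matrix.mul_diagonal, Matrix.mul_apply]
    simp only [Matrix.transpose_apply, Matrix.vandermonde_apply]
    show (Lagrange.basis univ lam (ι b)).coeff (m + (a : ℕ)) = (∑ s, T a s * μ b ^ (s : ℕ)) * w b
    rw [lag_basis_eq, Polynomial.coeff_C_mul]
    rw [show m + (a : ℕ) = (n - k) + (a : ℕ) from rfl]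
    rw [coeff_nodal_erase' lam hk (ι b) a, mul_comm]
    congr 1
  have hMdet : (M.submatrix id ι).det
      = (-1) ^ (k.choose 2) * (Matrix.vandermonde μ).det * ∏ b, w b := by
    rw [hMsub, Matrix.det_mul, Matrix.det_mul, Matrix.det_transpose, Matrix.det_diagonal, hTdet]
  rw [hMdet, hNdet]
  have hwprod : ∏ b, w b = (∏ i ∈ I.1, ∏ j ∈ univ.erase i, (lam i - lam j))⁻¹ := by
    rw [htrans (fun i => ∏ j ∈ univ.erase i, (lam i - lam j))]
    rw [← Finset.prod_inv_distrib]
    refine Finset.prod_congr rfl fun b _ => ?_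
    show ∏ j ∈ univ.erase (ι b), (lam (ι b) - lam j)⁻¹
      = (∏ j ∈ univ.erase (ι b), (lam (ι b) - lam j))⁻¹
    exact Finset.prod_inv_distrib _
  have hsplitc : ∀ i ∈ I.1, ∏ j ∈ univ.erase i, (lam i - lam j)
      = (∏ j ∈ I.1.erase i, (lam i - lam j)) * ∏ j ∈ I.1ᶜ, (lam i - lam j) := by
    intro i hi
    rw [← Finset.prod_union (Finset.disjoint_left.mpr
      (fun j hj hj' => (Finset.mem_compl.mp hj') (Finset.mem_of_mem_erase hj)))]
    apply Finset.prod_congr _ (fun _ _ => rfl)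
    ext j
    simp only [mem_erase, mem_univ, and_true, Finset.mem_union, Finset.mem_compl]
    by_cases hjI : j ∈ I.1
    · constructor
      · intro hji; exact Or.inl ⟨hji, hjI⟩
      · rintro (⟨hji, _⟩ | hc)
        · exact hji
        · exact absurd hjI hc
    · constructor
      · intro _; exact Or.inr hjI
      · intro _; intro hji; subst hji; exact hjI hi
  have hcprod : ∏ i ∈ I.1, ∏ j ∈ univ.erase i, (lam i - lam j)
      = (∏ i ∈ I.1, ∏ j ∈ I.1.erase i, (lam i - lam j))
          * ∏ i ∈ I.1, ∏ j ∈ I.1ᶜ, (lam i - lam j) := by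
    rw [← Finset.prod_mul_distrib]
    exact Finset.prod_congr rfl hsplitc
  have hQ : ∏ i ∈ I.1, ∏ j ∈ I.1.erase i, (lam i - lam j)
      = (-1) ^ (k.choose 2) * ((Matrix.vandermonde μ).det) ^ 2 := by
    rw [htrans (fun i => ∏ j ∈ I.1.erase i, (lam i - lam j))]
    have htr2 : ∀ a : Fin k, ∏ j ∈ I.1.erase (ι a), (lam (ι a) - lam j)
        = ∏ b ∈ univ.erase a, (μ a - μ b) := by
      intro a
      have h1 : I.1.erase (ι a) = (univ.erase a).image (fun b => ι b) := by
        rw [Finset.image_erase ι.injective, hIimg]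
      rw [h1, Finset.prod_image (fun x _ y _ h => ι.injective h)]
    simp only [htr2]
    rw [prod_offdiag_eq μ, Matrix.det_vandermonde]
  have hPrne : (∏ i ∈ I.1, ∏ j ∈ I.1ᶜ, (lam i - lam j)) ≠ 0 := by
    apply Finset.prod_ne_zero_iff.mpr
    intro i hi
    apply Finset.prod_ne_zero_iff.mpr
    intro j hj
    have hij : i ≠ j := fun h => (Finset.mem_compl.mp hj) (h ▸ hi)
    exact sub_ne_zero.mpr (fun h => hij (hlam h))
  rw [hwprod, hcprod, hQ]
  have hsne : ((-1 : F) ^ (k.choose 2)) ≠ 0 := pow_ne_zero _ (neg_ne_zero.mpr one_ne_zero)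
  have hs2 : ((-1 : F) ^ (k.choose 2)) * ((-1 : F) ^ (k.choose 2)) = 1 := by
    rw [← pow_add, ← two_mul, pow_mul, neg_one_sq, one_pow]
  rw [div_eq_iff hPrne, mul_inv, mul_inv]
  field_simp
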